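/- arXiv:2307.00029 — 2 statements merged into one kernel-verified Lean document; each statement's English description precedes it below -/
import Mathlib

section
/- The branching operator is a derivation with respect to grafting: B_∨(graft(f,g)) = graft(B_∨(f), g) + graft(f, B_∨(g)) for all elements f, g of the free vector space on rooted planar binary trees, where graft is extended bilinearly. -/
/-- Rooted planar binary trees. -/
inductive PBTree : Type
  | leaf : PBTree
  | graft : PBTree → PBTree → PBTree
  deriving DecidableEq

namespace PBTree

/-- The grade of a tree: its number of internal vertices. -/
def grade : PBTree → ℕ
  | leaf => 0
  | graft t1 t2 => grade t1 + grade t2 + 1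

/-- The weight character ω. -/
def weight : PBTree → ℕ
  | leaf => 1
  | graft t1 t2 => Nat.choose (grade t1 + grade t2) (grade t1) * weight t1 * weight t2

/-- The branching operator on a single tree: attach a cherry `∨` successively and
additively at each free leaf.  Values in the free ℚ-vector space `PBTree →₀ ℚ`. -/
noncomputable def Bv : PBTree → (PBTree →₀ ℚ)
  | leaf => Finsupp.single (graft leaf leaf) 1
  | graft t1 t2 =>
      (Bv t1).sum (fun σ a => Finsupp.single (graft σ t2) a)
        + (Bv t2).sum (fun σ a => Finsupp.single (graft t1 σ) a)

/-- The linear extension of the branching operator `B_∨` to the free vector space. -/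
noncomputable def BvLin (f : PBTree →₀ ℚ) : PBTree →₀ ℚ :=
  f.sum fun τ a => a • Bv τ

/-- The bilinear extension of grafting to the free vector space. -/
noncomputable def graftLin (f g : PBTree →₀ ℚ) : PBTree →₀ ℚ :=
  f.sum fun τ1 a => g.sum fun τ2 b => Finsupp.single (graft τ1 τ2) (a * b)

/-- The grading operator `G`, sending a tree `τ` of positive grade to `(1/|τ|)·τ`,
extended linearly. -/
noncomputable def Gop (f : PBTree →₀ ℚ) : PBTree →₀ ℚ :=
  f.sum fun τ a => Finsupp.single τ ((grade τ : ℚ)⁻¹ * a)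

end PBTree

namespace PBTree

lemma graftLin_zero_left (g : PBTree →₀ ℚ) : graftLin 0 g = 0 := by
  simp [graftLin]

lemma graftLin_zero_right (f : PBTree →₀ ℚ) : graftLin f 0 = 0 := by
  simp [graftLin]

lemma graftLin_add_left (f f' g : PBTree →₀ ℚ) :
    graftLin (f + f') g = graftLin f g + graftLin f' g := by
  unfold graftLin
  rw [Finsupp.sum_add_index]
  · intro τ1 _; simp
  · intro τ1 _ a a'
    rw [← Finsupp.sum_add]
    congr 1; ext τ2 b
    rw [add_mul, Finsupp.single_add]

lemma graftLin_add_right (f g g' : PBTree →₀ ℚ) :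
    graftLin f (g + g') = graftLin f g + graftLin f g' := by
  unfold graftLin
  rw [← Finsupp.sum_add]
  congr 1; ext τ1 a
  rw [Finsupp.sum_add_index]
  · intro τ2 _; simp
  · intro τ2 _ b b'
    rw [mul_add, Finsupp.single_add]

lemma graftLin_smul_left (c : ℚ) (f g : PBTree →₀ ℚ) :
    graftLin (c • f) g = c • graftLin f g := by
  unfold graftLin
  rw [Finsupp.sum_smul_index (by intro τ1; simp), Finsupp.smul_sum]
  refine Finsupp.sum_congr fun τ1 _ => ?_
  rw [Finsupp.smul_sum]
  refine Finsupp.sum_congr fun τ2 _ => ?_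
  rw [Finsupp.smul_single, smul_eq_mul, mul_assoc]

lemma graftLin_smul_right (c : ℚ) (f g : PBTree →₀ ℚ) :
    graftLin f (c • g) = c • graftLin f g := by
  unfold graftLin
  rw [Finsupp.smul_sum]
  refine Finsupp.sum_congr fun τ1 _ => ?_
  rw [Finsupp.sum_smul_index (by intro τ2; simp), Finsupp.smul_sum]
  refine Finsupp.sum_congr fun τ2 _ => ?_
  rw [Finsupp.smul_single, smul_eq_mul]
  ring_nf

lemma graftLin_single_single (s t : PBTree) (a b : ℚ) :
    graftLin (Finsupp.single s a) (Finsupp.single t b)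
      = Finsupp.single (graft s t) (a * b) := by
  unfold graftLin
  rw [Finsupp.sum_single_index (by simp), Finsupp.sum_single_index (by simp)]

lemma BvLin_zero : BvLin 0 = 0 := by simp [BvLin]

lemma BvLin_add (f f' : PBTree →₀ ℚ) : BvLin (f + f') = BvLin f + BvLin f' := by
  unfold BvLin
  rw [Finsupp.sum_add_index]
  · intro τ _; simp
  · intro τ _ a a'; rw [add_smul]

lemma BvLin_single (t : PBTree) (a : ℚ) :
    BvLin (Finsupp.single t a) = a • Bv t := by
  unfold BvLin
  rw [Finsupp.sum_single_index]; simp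

lemma Bv_graft (t1 t2 : PBTree) :
    Bv (graft t1 t2)
      = graftLin (Bv t1) (Finsupp.single t2 1)
        + graftLin (Finsupp.single t1 1) (Bv t2) := by
  rw [Bv]
  congr 1
  · unfold graftLin
    congr 1; ext σ a
    rw [Finsupp.sum_single_index (by simp), mul_one]
  · unfold graftLin
    rw [Finsupp.sum_single_index (by simp)]
    congr 1; ext σ b
    rw [one_mul]

end PBTree

open PBTree in
/-- The branching operator is a derivation with respect to grafting:
`B_∨(graft(f,g)) = graft(B_∨(f), g) + graft(f, B_∨(g))` for all elements `f, g`
of the free vector space on rooted planar binary trees. -/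
theorem branching_derivation (f g : PBTree →₀ ℚ) :
    BvLin (graftLin f g) = graftLin (BvLin f) g + graftLin f (BvLin g) := by
  induction f using Finsupp.induction_linear with
  | zero => simp [graftLin_zero_left, BvLin_zero]
  | add f f' hf hf' =>
      rw [graftLin_add_left, BvLin_add, hf, hf', BvLin_add, graftLin_add_left,
        graftLin_add_left]
      abel
  | single s a =>
      induction g using Finsupp.induction_linear with
      | zero => simp [graftLin_zero_right, BvLin_zero]
      | add g g' hg hg' =>
          rw [graftLin_add_right, BvLin_add, hg, hg', BvLin_add, graftLin_add_right,
            graftLin_add_right]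
          abel
      | single t b =>
          have hs : Finsupp.single s a = a • Finsupp.single s (1 : ℚ) := by simp
          have ht : Finsupp.single t b = b • Finsupp.single t (1 : ℚ) := by simp
          rw [graftLin_single_single, BvLin_single, Bv_graft, BvLin_single, BvLin_single,
            smul_add, hs, ht, graftLin_smul_left, graftLin_smul_left, graftLin_smul_right,
            graftLin_smul_right]
          simp [smul_smul, mul_comm b a]
end

section
/- For the solution g of the Smoluchowski tree equation, the branching and grafting actions coincide: B_∨(g) = graft(g, g) as formal power series; equivalently, for every n ≥ 0, B_∨(g_n) = Σ_{k=0}^{n} binomial(n,k) graft(g_{n−k}, g_k) = g_{n+1}. -/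
namespace PBTree

lemma sum_single_left (f : PBTree →₀ ℚ) (t2 s1 s2 : PBTree) :
    (f.sum fun σ a => Finsupp.single (graft σ t2) a) (graft s1 s2)
      = if t2 = s2 then f s1 else 0 := by
  rw [Finsupp.sum_apply]
  have key : ∀ (σ : PBTree) (a : ℚ),
      (Finsupp.single (graft σ t2) a) (graft s1 s2)
        = if σ = s1 then (if t2 = s2 then a else 0) else 0 := by
    intro σ a
    rw [Finsupp.single_apply]
    by_cases h1 : σ = s1 <;> by_cases h2 : t2 = s2 <;> simp [graft.injEq, h1, h2]
  simp_rw [key]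
  by_cases h2 : t2 = s2
  · simp only [h2, if_true]
    exact Finsupp.sum_ite_self_eq' f s1
  · simp [h2]

lemma sum_single_right (f : PBTree →₀ ℚ) (t1 s1 s2 : PBTree) :
    (f.sum fun σ a => Finsupp.single (graft t1 σ) a) (graft s1 s2)
      = if t1 = s1 then f s2 else 0 := by
  rw [Finsupp.sum_apply]
  have key : ∀ (σ : PBTree) (a : ℚ),
      (Finsupp.single (graft t1 σ) a) (graft s1 s2)
        = if σ = s2 then (if t1 = s1 then a else 0) else 0 := by
    intro σ a
    rw [Finsupp.single_apply]
    by_cases h1 : σ = s2 <;> by_cases h2 : t1 = s1 <;> simp [graft.injEq, h1, h2]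
  simp_rw [key]
  by_cases h2 : t1 = s1
  · simp only [h2, if_true]
    exact Finsupp.sum_ite_self_eq' f s2
  · simp [h2]

lemma sum_single_leaf_left (f : PBTree →₀ ℚ) (t2 : PBTree) :
    (f.sum fun σ a => Finsupp.single (graft σ t2) a) leaf = 0 := by
  rw [Finsupp.sum_apply, Finsupp.sum]
  apply Finset.sum_eq_zero
  intro x _
  rw [Finsupp.single_apply]
  simp

lemma sum_single_leaf_right (f : PBTree →₀ ℚ) (t1 : PBTree) :
    (f.sum fun σ a => Finsupp.single (graft t1 σ) a) leaf = 0 := by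
  rw [Finsupp.sum_apply, Finsupp.sum]
  apply Finset.sum_eq_zero
  intro x _
  rw [Finsupp.single_apply]
  simp

lemma Bv_apply_leaf (τ : PBTree) : Bv τ leaf = 0 := by
  cases τ with
  | leaf => simp [Bv, Finsupp.single_apply]
  | graft t1 t2 =>
    simp only [Bv, Finsupp.add_apply, sum_single_leaf_left, sum_single_leaf_right, add_zero]

lemma Bv_graft_apply (t1 t2 s1 s2 : PBTree) :
    Bv (graft t1 t2) (graft s1 s2)
      = (if t2 = s2 then Bv t1 s1 else 0) + (if t1 = s1 then Bv t2 s2 else 0) := by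
  simp only [Bv, Finsupp.add_apply, sum_single_left, sum_single_right]

lemma Bv_grade : ∀ τ σ : PBTree, Bv τ σ ≠ 0 → grade σ = grade τ + 1 := by
  intro τ
  induction τ with
  | leaf =>
    intro σ h
    rw [Bv, Finsupp.single_apply] at h
    split at h
    · next heq => subst heq; simp [grade]
    · exact absurd rfl h
  | graft t1 t2 ih1 ih2 =>
    intro σ h
    cases σ with
    | leaf => rw [Bv_apply_leaf] at h; exact absurd rfl h
    | graft s1 s2 =>
      rw [Bv_graft_apply] at h
      have hor : (if t2 = s2 then Bv t1 s1 else 0) ≠ 0 ∨ (if t1 = s1 then Bv t2 s2 else 0) ≠ 0 := by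
        by_contra hc
        push_neg at hc
        rw [hc.1, hc.2] at h
        simp at h
      rcases hor with h1 | h1
      · split at h1
        · next h2 =>
          subst h2
          have hg := ih1 s1 h1
          simp only [grade]
          omega
        · exact absurd rfl h1
      · split at h1
        · next h2 =>
          subst h2
          have hg := ih2 s2 h1
          simp only [grade]
          omega
        · exact absurd rfl h1

/-- The adjoint of the branching operator. -/
noncomputable def Dv : PBTree → (PBTree →₀ ℚ)
  | leaf => 0
  | graft s1 s2 =>
      (if s1 = leaf ∧ s2 = leaf then Finsupp.single leaf (1 : ℚ) else 0)
      + (Dv s1).sum (fun t c => Finsupp.single (graft t s2) c)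
      + (Dv s2).sum (fun t c => Finsupp.single (graft s1 t) c)

lemma Dv_apply : ∀ σ τ : PBTree, Dv σ τ = Bv τ σ := by
  intro σ
  induction σ with
  | leaf => intro τ; rw [Bv_apply_leaf]; simp [Dv]
  | graft s1 s2 ih1 ih2 =>
    intro τ
    cases τ with
    | leaf =>
      simp only [Dv, Finsupp.add_apply, sum_single_leaf_left, sum_single_leaf_right, add_zero]
      rw [Bv, Finsupp.single_apply]
      by_cases hc : s1 = leaf ∧ s2 = leaf
      · simp [hc.1, hc.2]
      · rw [if_neg hc, if_neg]
        · simp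
        · intro h
          rw [graft.injEq] at h
          exact hc ⟨h.1.symm, h.2.symm⟩
    | graft t1 t2 =>
      simp only [Dv, Finsupp.add_apply, sum_single_left, sum_single_right]
      rw [Bv_graft_apply]
      have hz : ((if s1 = leaf ∧ s2 = leaf then Finsupp.single leaf (1:ℚ) else 0)) (graft t1 t2) = 0 := by
        split
        · rw [Finsupp.single_apply, if_neg]; simp
        · simp
      rw [hz, zero_add, ih1, ih2]
      by_cases h1 : s2 = t2 <;> by_cases h2 : s1 = t1 <;>
        simp [h1, h2, eq_comm]

lemma BvLin_apply_eq (f : PBTree →₀ ℚ) (σ : PBTree) :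
    BvLin f σ = (Dv σ).sum fun τ c => f τ * c := by
  rw [BvLin, Finsupp.sum_apply, Finsupp.sum, Finsupp.sum]
  have step : ∀ τ ∈ f.support, (f τ • Bv τ) σ = f τ * Dv σ τ := by
    intro τ _
    rw [Finsupp.smul_apply, smul_eq_mul, Dv_apply]
  rw [Finset.sum_congr rfl step]
  rw [Finset.sum_subset (Finset.subset_union_left (s₂ := (Dv σ).support))
    (fun x _ hx => by rw [Finsupp.notMem_support_iff.mp hx, zero_mul])]
  rw [← Finset.sum_subset (Finset.subset_union_right (s₁ := f.support))
    (fun x _ hx => by rw [Finsupp.notMem_support_iff.mp hx, mul_zero])]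

lemma grade_eq_zero {τ : PBTree} (h : grade τ = 0) : τ = leaf := by
  cases τ
  · rfl
  · simp [grade] at h

lemma Dv_leaf : Dv leaf = 0 := rfl

lemma side_left (gn : ℕ → (PBTree →₀ ℚ))
    (hgn : ∀ n τ, gn n τ = if grade τ = n then (weight τ : ℚ) else 0)
    (s1 s2 : PBTree) (m k1 : ℕ) (hs1 : grade s1 = k1 + 1)
    (ihs1 : ∀ m', BvLin (gn m') s1 = gn (m' + 1) s1) :
    ((Dv s1).sum fun t c => gn m (graft t s2) * c)
      = (if k1 + grade s2 + 1 = m then ((k1 + grade s2).choose k1 : ℚ) * (weight s2 : ℚ) else 0)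
          * (weight s1 : ℚ) := by
  have step : ∀ t ∈ (Dv s1).support,
      gn m (graft t s2) * Dv s1 t
        = (if k1 + grade s2 + 1 = m then ((k1 + grade s2).choose k1 : ℚ) * (weight s2 : ℚ) else 0)
            * (gn k1 t * Dv s1 t) := by
    intro t ht
    have hgt : grade t = k1 := by
      have h := Bv_grade t s1 (by rw [← Dv_apply]; exact Finsupp.mem_support_iff.mp ht)
      omega
    rw [hgn m (graft t s2), hgn k1 t, if_pos hgt]
    simp only [grade, weight, hgt]
    split_ifs with h1
    · push_cast
      ring
    · ring
  rw [Finsupp.sum_congr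
      (g2 := fun t c => (if k1 + grade s2 + 1 = m
        then ((k1 + grade s2).choose k1 : ℚ) * (weight s2 : ℚ) else 0) * (gn k1 t * c)) step,
    ← Finsupp.mul_sum, ← BvLin_apply_eq, ihs1 k1, hgn (k1 + 1) s1, if_pos hs1]

lemma side_right (gn : ℕ → (PBTree →₀ ℚ))
    (hgn : ∀ n τ, gn n τ = if grade τ = n then (weight τ : ℚ) else 0)
    (s1 s2 : PBTree) (m k2 : ℕ) (hs2 : grade s2 = k2 + 1)
    (ihs2 : ∀ m', BvLin (gn m') s2 = gn (m' + 1) s2) :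
    ((Dv s2).sum fun t c => gn m (graft s1 t) * c)
      = (if grade s1 + k2 + 1 = m then ((grade s1 + k2).choose (grade s1) : ℚ) * (weight s1 : ℚ) else 0)
          * (weight s2 : ℚ) := by
  have step : ∀ t ∈ (Dv s2).support,
      gn m (graft s1 t) * Dv s2 t
        = (if grade s1 + k2 + 1 = m then ((grade s1 + k2).choose (grade s1) : ℚ) * (weight s1 : ℚ) else 0)
            * (gn k2 t * Dv s2 t) := by
    intro t ht
    have hgt : grade t = k2 := by
      have h := Bv_grade t s2 (by rw [← Dv_apply]; exact Finsupp.mem_support_iff.mp ht)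
      omega
    rw [hgn m (graft s1 t), hgn k2 t, if_pos hgt]
    simp only [grade, weight, hgt]
    split_ifs with h1
    · push_cast
      ring
    · ring
  rw [Finsupp.sum_congr
      (g2 := fun t c => (if grade s1 + k2 + 1 = m
        then ((grade s1 + k2).choose (grade s1) : ℚ) * (weight s1 : ℚ) else 0) * (gn k2 t * c)) step,
    ← Finsupp.mul_sum, ← BvLin_apply_eq, ihs2 k2, hgn (k2 + 1) s2, if_pos hs2]

lemma main_lemma (gn : ℕ → (PBTree →₀ ℚ))
    (hgn : ∀ n τ, gn n τ = if grade τ = n then (weight τ : ℚ) else 0) :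
    ∀ σ m, BvLin (gn m) σ = gn (m + 1) σ := by
  intro σ
  induction σ with
  | leaf =>
    intro m
    rw [BvLin_apply_eq, hgn (m + 1) leaf, Dv_leaf, Finsupp.sum_zero_index,
      if_neg (by simp [grade])]
  | graft s1 s2 ih1 ih2 =>
    intro m
    have hz : ∀ τ : PBTree, gn m τ * (0 : ℚ) = 0 := fun τ => mul_zero _
    have hadd : ∀ (τ : PBTree) (b₁ b₂ : ℚ), gn m τ * (b₁ + b₂) = gn m τ * b₁ + gn m τ * b₂ :=
      fun τ b₁ b₂ => mul_add _ _ _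
    have hsingle : ∀ (a : PBTree) (b : ℚ),
        ((Finsupp.single a b).sum fun τ c => gn m τ * c) = gn m a * b :=
      fun a b => Finsupp.sum_single_index (hz a)
    rw [BvLin_apply_eq, Dv, Finsupp.sum_add_index' hz hadd, Finsupp.sum_add_index' hz hadd,
      Finsupp.sum_sum_index hz hadd, Finsupp.sum_sum_index hz hadd]
    have hBsum : ((Dv s1).sum fun t c => (Finsupp.single (graft t s2) c).sum fun τ c' => gn m τ * c')
        = (Dv s1).sum fun t c => gn m (graft t s2) * c :=
      Finsupp.sum_congr (g2 := fun t c => gn m (graft t s2) * c) fun t _ => hsingle _ _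
    have hCsum : ((Dv s2).sum fun t c => (Finsupp.single (graft s1 t) c).sum fun τ c' => gn m τ * c')
        = (Dv s2).sum fun t c => gn m (graft s1 t) * c :=
      Finsupp.sum_congr (g2 := fun t c => gn m (graft s1 t) * c) fun t _ => hsingle _ _
    have hA : ((if s1 = leaf ∧ s2 = leaf then Finsupp.single leaf (1 : ℚ) else 0).sum
          fun τ c => gn m τ * c)
        = if s1 = leaf ∧ s2 = leaf then gn m leaf else 0 := by
      by_cases hc : s1 = leaf ∧ s2 = leaf
      · rw [if_pos hc, if_pos hc, hsingle, mul_one]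
      · rw [if_neg hc, if_neg hc]
        exact Finsupp.sum_zero_index
    rw [hBsum, hCsum, hA, hgn (m + 1) (graft s1 s2)]
    rw [show grade (graft s1 s2) = grade s1 + grade s2 + 1 from rfl]
    simp only [grade, weight]
    by_cases h1 : s1 = leaf
    · by_cases h2 : s2 = leaf
      · subst h1; subst h2
        rw [Dv_leaf, Finsupp.sum_zero_index, Finsupp.sum_zero_index, hgn m leaf]
        simp only [grade, weight, eq_self_iff_true, and_self, if_true]
        split_ifs <;>
          first
            | omega
            | (push_cast [Nat.choose_self, Nat.choose_zero_right]; ring1)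
            | (subst_vars <;> simp_all <;> omega)
            | (exact absurd ⟨trivial, trivial⟩ (by assumption))
            | simp_all
      · subst h1
        obtain ⟨k2, hk2⟩ : ∃ k2, grade s2 = k2 + 1 := by
          have : grade s2 ≠ 0 := fun h => h2 (grade_eq_zero h)
          exact ⟨grade s2 - 1, by omega⟩
        rw [Dv_leaf, Finsupp.sum_zero_index,
          side_right gn hgn leaf s2 m k2 hk2 ih2,
          if_neg (fun hc : leaf = leaf ∧ s2 = leaf => h2 hc.2)]
        simp only [grade, weight, hk2]
        split_ifs <;>
          first
            | omega
            | (push_cast [Nat.choose_self, Nat.choose_zero_right]; ring1)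
            | (subst_vars <;> simp_all <;> done)
            | (exact absurd ⟨trivial, trivial⟩ (by assumption))
            | simp_all
    · obtain ⟨k1, hk1⟩ : ∃ k1, grade s1 = k1 + 1 := by
        have : grade s1 ≠ 0 := fun h => h1 (grade_eq_zero h)
        exact ⟨grade s1 - 1, by omega⟩
      rw [side_left gn hgn s1 s2 m k1 hk1 ih1,
        if_neg (fun hc : s1 = leaf ∧ s2 = leaf => h1 hc.1)]
      by_cases h2 : s2 = leaf
      · subst h2
        rw [Dv_leaf, Finsupp.sum_zero_index]
        simp only [grade, weight, hk1, Nat.add_zero, Nat.choose_self]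
        split_ifs <;>
          first
            | omega
            | (push_cast [Nat.choose_self, Nat.choose_zero_right]; ring)
            | (exact absurd ⟨trivial, trivial⟩ (by assumption))
            | simp_all
      · obtain ⟨k2, hk2⟩ : ∃ k2, grade s2 = k2 + 1 := by
          have : grade s2 ≠ 0 := fun h => h2 (grade_eq_zero h)
          exact ⟨grade s2 - 1, by omega⟩
        rw [side_right gn hgn s1 s2 m k2 hk2 ih2, hk1, hk2]
        have key : (k1 + (k2 + 1)).choose k1 + (k1 + 1 + k2).choose (k1 + 1)
            = (k1 + 1 + (k2 + 1)).choose (k1 + 1) := by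
          rw [show k1 + (k2 + 1) = k1 + k2 + 1 by omega,
            show k1 + 1 + k2 = k1 + k2 + 1 by omega,
            show k1 + 1 + (k2 + 1) = (k1 + k2 + 1) + 1 by omega]
          exact (Nat.choose_succ_succ _ _).symm
        split_ifs <;>
          first
            | omega
            | (rw [zero_add, ← key]; push_cast; ring)
            | simp

lemma graftLin_apply_leaf (f g : PBTree →₀ ℚ) : graftLin f g leaf = 0 := by
  rw [graftLin, Finsupp.sum_apply]
  apply Finset.sum_eq_zero
  intro x _
  dsimp only
  rw [Finsupp.sum_apply]
  apply Finset.sum_eq_zero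
  intro y _
  dsimp only
  rw [Finsupp.single_apply]
  simp

lemma graftLin_apply_graft (f g : PBTree →₀ ℚ) (τ1 τ2 : PBTree) :
    graftLin f g (graft τ1 τ2) = f τ1 * g τ2 := by
  rw [graftLin, Finsupp.sum_apply]
  have key : ∀ (x : PBTree) (a : ℚ),
      (g.sum fun y b => Finsupp.single (graft x y) (a * b)) (graft τ1 τ2)
        = (if x = τ1 then a else 0) * g τ2 := by
    intro x a
    rw [Finsupp.sum_apply]
    have inner : ∀ (y : PBTree) (b : ℚ),
        (Finsupp.single (graft x y) (a * b)) (graft τ1 τ2)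
          = (if x = τ1 then a else 0) * (if y = τ2 then b else 0) := by
      intro y b
      rw [Finsupp.single_apply]
      by_cases h1 : y = τ2 <;> by_cases h2 : x = τ1 <;> simp [graft.injEq, h1, h2]
    simp_rw [inner]
    rw [← Finsupp.mul_sum, Finsupp.sum_ite_self_eq']
  rw [show (f.sum fun x a => (g.sum fun y b => (Finsupp.single (graft x y) (a * b))) (graft τ1 τ2))
      = f.sum fun x a => (if x = τ1 then a else 0) * g τ2 from
    Finsupp.sum_congr fun x _ => key x (f x)]
  rw [← Finsupp.sum_mul, Finsupp.sum_ite_self_eq']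

lemma sum_formula (gn : ℕ → (PBTree →₀ ℚ))
    (hgn : ∀ n τ, gn n τ = if grade τ = n then (weight τ : ℚ) else 0) (n : ℕ) :
    (∑ k ∈ Finset.range (n + 1), (n.choose k : ℚ) • graftLin (gn (n - k)) (gn k))
      = gn (n + 1) := by
  ext τ
  rw [Finset.sum_apply']
  cases τ with
  | leaf =>
    rw [hgn (n + 1) leaf, if_neg (by simp [grade])]
    apply Finset.sum_eq_zero
    intro k _
    rw [Finsupp.smul_apply, graftLin_apply_leaf, smul_zero]
  | graft τ1 τ2 =>
    have term : ∀ k, ((n.choose k : ℚ) • graftLin (gn (n - k)) (gn k)) (graft τ1 τ2)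
        = (n.choose k : ℚ) * ((if grade τ1 = n - k then (weight τ1 : ℚ) else 0)
            * (if grade τ2 = k then (weight τ2 : ℚ) else 0)) := by
      intro k
      rw [Finsupp.smul_apply, graftLin_apply_graft, hgn, hgn, smul_eq_mul]
    rw [Finset.sum_congr rfl (fun k _ => term k), hgn (n + 1) (graft τ1 τ2)]
    rw [show grade (graft τ1 τ2) = grade τ1 + grade τ2 + 1 from rfl]
    simp only [grade, weight]
    by_cases hn : grade τ1 + grade τ2 = n
    · rw [Finset.sum_eq_single (grade τ2)]
      · rw [if_pos (by omega : grade τ1 = n - grade τ2), if_pos rfl,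
          if_pos (by omega : grade τ1 + grade τ2 + 1 = n + 1)]
        have hsymm : n.choose (grade τ2) = n.choose (grade τ1) := by
          rw [show grade τ1 = n - grade τ2 by omega]
          exact (Nat.choose_symm (by omega)).symm
        rw [hsymm, hn]
        push_cast
        ring
      · intro k _ hk
        rw [if_neg (fun h : grade τ2 = k => hk h.symm), mul_zero, mul_zero]
      · intro h
        exact absurd (Finset.mem_range.mpr (by omega)) h
    · rw [if_neg (by omega), Finset.sum_eq_zero]
      intro k hk
      by_cases h2 : grade τ2 = k
      · rw [if_neg (by rw [← h2]; simp only [Finset.mem_range] at hk; omega), zero_mul, mul_zero]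
      · rw [if_neg h2, mul_zero, mul_zero]

end PBTree

open PBTree in
/-- For the solution of the Smoluchowski tree equation, branching and grafting coincide:
for every `n ≥ 0`, `B_∨(g_n) = Σ_{k=0}^{n} binomial(n,k) graft(g_{n−k}, g_k) = g_{n+1}`,
where `gn n = Σ_{|τ|=n} ω(τ)·τ` (characterized by its coefficients). -/
theorem branching_eq_grafting_on_solution
    (gn : ℕ → (PBTree →₀ ℚ))
    (hgn : ∀ n τ, gn n τ = if grade τ = n then (weight τ : ℚ) else 0) (n : ℕ) :
    BvLin (gn n)
        = ∑ k ∈ Finset.range (n + 1), (n.choose k : ℚ) • graftLin (gn (n - k)) (gn k)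
    ∧ BvLin (gn n) = gn (n + 1) := by
  have h2 : BvLin (gn n) = gn (n + 1) := by
    ext σ
    exact main_lemma gn hgn σ n
  exact ⟨by rw [h2, sum_formula gn hgn n], h2⟩
end
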